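/- Let N be a nilpotent n × n real matrix with N^k = 0, and let h : ℝ → ℝⁿ be k-times continuously differentiable. Then the unique solution of N w' + w = h(t) is w(t) = Σ_{i=0}^{k-1} (-1)^i N^i h^{(i)}(t). -/

import Mathlib

section aux

variable {n : ℕ}

/-- Differentiating through a constant matrix. -/
private lemma mulVec_hasDerivAt (M : Matrix (Fin n) (Fin n) ℝ)
    {f : ℝ → Fin n → ℝ} {f' : Fin n → ℝ} {t : ℝ} (hf : HasDerivAt f f' t) :
    HasDerivAt (fun s => M.mulVec (f s)) (M.mulVec f') t := by
  have := (LinearMap.toContinuousLinearMap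
    (Matrix.mulVecLin M)).hasFDerivAt.comp_hasDerivAt t hf
  exact this

private lemma mulVec_deriv (M : Matrix (Fin n) (Fin n) ℝ)
    {f : ℝ → Fin n → ℝ} {t : ℝ} (hf : DifferentiableAt ℝ f t) :
    deriv (fun s => M.mulVec (f s)) t = M.mulVec (deriv f t) :=
  (mulVec_hasDerivAt M hf.hasDerivAt).deriv

private lemma mulVec_differentiable (M : Matrix (Fin n) (Fin n) ℝ)
    {f : ℝ → Fin n → ℝ} (hf : Differentiable ℝ f) :
    Differentiable ℝ (fun s => M.mulVec (f s)) :=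
  fun t => (mulVec_hasDerivAt M (hf t).hasDerivAt).differentiableAt

/-- The key uniqueness step: if `N v' + v = 0` then `N^m v ≡ 0` descends. -/
private lemma nilpotent_step (N : Matrix (Fin n) (Fin n) ℝ)
    {v : ℝ → Fin n → ℝ} (hvd : Differentiable ℝ v)
    (hv : ∀ t, N.mulVec (deriv v t) + v t = 0) (m : ℕ)
    (hm : ∀ t, (N ^ (m + 1)).mulVec (v t) = 0) :
    ∀ t, (N ^ m).mulVec (v t) = 0 := by
  intro t
  have h1 : v t = -(N.mulVec (deriv v t)) := by
    have := hv t; linear_combination (norm := module) this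
  have h2 : (N ^ m).mulVec (v t) = -((N ^ (m + 1)).mulVec (deriv v t)) := by
    rw [h1, Matrix.mulVec_neg, Matrix.mulVec_mulVec, ← pow_succ]
  have h3 : deriv (fun s => (N ^ (m + 1)).mulVec (v s)) t
      = (N ^ (m + 1)).mulVec (deriv v t) := mulVec_deriv _ (hvd t)
  have h4 : (fun s => (N ^ (m + 1)).mulVec (v s)) = fun _ => (0 : Fin n → ℝ) := by
    funext s; exact hm s
  rw [h2, ← h3, h4]
  simp

end aux

/-- The nilpotent subsystem `N w' + w = h(t)` with `N^k = 0` and `h` k-times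
continuously differentiable has the unique solution
`w(t) = ∑_{i=0}^{k-1} (-1)^i N^i h^{(i)}(t)`. -/
theorem nilpotent_DAE_unique_solution (n k : ℕ)
    (N : Matrix (Fin n) (Fin n) ℝ) (hN : N ^ k = 0)
    (h : ℝ → Fin n → ℝ) (hh : ContDiff ℝ k h)
    (w : ℝ → Fin n → ℝ) :
    (Differentiable ℝ w ∧ ∀ t, N.mulVec (deriv w t) + w t = h t) ↔
      w = fun t => ∑ i ∈ Finset.range k,
        ((-1 : ℝ) ^ i • (N ^ i).mulVec (iteratedDeriv i h t)) := by
  set W : ℝ → Fin n → ℝ := fun t => ∑ i ∈ Finset.range k,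
      ((-1 : ℝ) ^ i • (N ^ i).mulVec (iteratedDeriv i h t)) with hWdef
  -- differentiability of the iterated derivatives of `h`
  have hdi : ∀ i < k, Differentiable ℝ (iteratedDeriv i h) := by
    intro i hi
    exact hh.differentiable_iteratedDeriv i (by exact_mod_cast hi)
  -- each summand of W
  have hterm : ∀ i < k, Differentiable ℝ
      (fun t => ((-1 : ℝ) ^ i • (N ^ i).mulVec (iteratedDeriv i h t))) := by
    intro i hi
    exact (mulVec_differentiable (N ^ i) (hdi i hi)).const_smul ((-1 : ℝ) ^ i)
  have hWd : Differentiable ℝ W := by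
    apply Differentiable.fun_sum
    intro i hi
    exact hterm i (Finset.mem_range.mp hi)
  -- derivative of W
  have hWderiv : ∀ t, deriv W t = ∑ i ∈ Finset.range k,
      ((-1 : ℝ) ^ i • (N ^ i).mulVec (iteratedDeriv (i + 1) h t)) := by
    intro t
    rw [hWdef]
    rw [deriv_fun_sum (fun i hi => (hterm i (Finset.mem_range.mp hi)).differentiableAt)]
    refine Finset.sum_congr rfl fun i hi => ?_
    have hi' := Finset.mem_range.mp hi
    rw [deriv_fun_const_smul _ (mulVec_differentiable (N ^ i) (hdi i hi')).differentiableAt,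
      mulVec_deriv _ ((hdi i hi') t), ← iteratedDeriv_succ]
  -- W solves the DAE (telescoping)
  have hWsol : ∀ t, N.mulVec (deriv W t) + W t = h t := by
    intro t
    set g : ℕ → Fin n → ℝ := fun i => (-1 : ℝ) ^ i • (N ^ i).mulVec (iteratedDeriv i h t)
      with hg
    have hstep : N.mulVec (deriv W t) = ∑ i ∈ Finset.range k, -(g (i + 1)) := by
      rw [hWderiv t]
      rw [show N.mulVec (∑ i ∈ Finset.range k,
          (-1 : ℝ) ^ i • (N ^ i).mulVec (iteratedDeriv (i + 1) h t))
        = ∑ i ∈ Finset.range k,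
          N.mulVec ((-1 : ℝ) ^ i • (N ^ i).mulVec (iteratedDeriv (i + 1) h t)) from
        map_sum (Matrix.mulVecLin N) _ _]
      refine Finset.sum_congr rfl fun i _ => ?_
      rw [hg]
      simp only [Matrix.mulVec_smul, Matrix.mulVec_mulVec, ← pow_succ']
      rw [pow_succ]
      module
    have hWt : W t = ∑ i ∈ Finset.range k, g i := rfl
    rw [hstep, hWt, ← Finset.sum_add_distrib]
    have : ∀ i ∈ Finset.range k, -(g (i + 1)) + g i = g i - g (i + 1) := by
      intro i _; abel
    rw [Finset.sum_congr rfl this, Finset.sum_range_sub']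
    have hg0 : g 0 = h t := by simp [hg]
    have hgk : g k = 0 := by simp [hg, hN]
    rw [hg0, hgk, sub_zero]
  constructor
  · rintro ⟨hwd, hweq⟩
    -- v := w - W satisfies N v' + v = 0
    set v : ℝ → Fin n → ℝ := fun t => w t - W t with hv
    have hvd : Differentiable ℝ v := hwd.sub hWd
    have hveq : ∀ t, N.mulVec (deriv v t) + v t = 0 := by
      intro t
      have hdv : deriv v t = deriv w t - deriv W t := by
        rw [hv]
        exact deriv_sub (hwd t) (hWd t)
      rw [hdv, hv]
      simp only [hdv, Matrix.mulVec_sub]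
      have h1 := hweq t
      have h2 := hWsol t
      linear_combination (norm := module) h1 - h2
    -- downward induction: N^(k-d) v ≡ 0
    have key : ∀ d, ∀ t, (N ^ (k - d)).mulVec (v t) = 0 := by
      intro d
      induction d with
      | zero => intro t; simp [hN]
      | succ d ih =>
        rcases le_or_gt k d with hkd | hdk
        · have : k - (d + 1) = k - d := by omega
          rw [this]; exact ih
        · have hkd' : k - d = (k - (d + 1)) + 1 := by omega
          rw [hkd'] at ih
          exact nilpotent_step N hvd hveq _ ih
    have hv0 : ∀ t, v t = 0 := by
      intro t
      have := key k t
      simpa using this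
    funext t
    have := hv0 t
    rw [hv] at this
    simpa [sub_eq_zero] using this
  · rintro rfl
    exact ⟨hWd, hWsol⟩
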